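/- arXiv:0910.0814 — 2 statements merged into one kernel-verified Lean document; each statement's English description precedes it below -/
import Mathlib

section
/- Every necklace is an ordered simplicial set. -/
open CategoryTheory Simplicial

namespace Paper

/-- The directed-edge relation on vertices of a simplicial set. -/
def edgeRel (X : SSet) (x y : X _⦋0⦌) : Prop :=
  ∃ e : X _⦋1⦌, X.δ 1 e = x ∧ X.δ 0 e = y

/-- `x ⪯ y` iff there is a finite directed path of 1-simplices from `x` to `y`. -/
def vertPath (X : SSet) : X _⦋0⦌ → X _⦋0⦌ → Prop :=
  Relation.ReflTransGen (edgeRel X)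

/-- The sequence of vertices of an `n`-simplex. -/
def vertexSeq {X : SSet} {n : ℕ} (x : X _⦋n⦌) : Fin (n + 1) → X _⦋0⦌ :=
  fun i => X.map (SimplexCategory.const (⦋0⦌ : SimplexCategory) ⦋n⦌ i).op x

/-- A simplicial set is *ordered* if the path preorder on its vertices is
antisymmetric and every simplex is determined by its sequence of vertices. -/
def Ordered (X : SSet) : Prop :=
  (∀ x y : X _⦋0⦌, vertPath X x y → vertPath X y x → x = y) ∧
  (∀ (n : ℕ) (x y : X _⦋n⦌), vertexSeq x = vertexSeq y → x = y)

/-- A hands-on model of the standard `n`-simplex. -/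
def Δstd (n : ℕ) : SSet where
  obj m := Fin (m.unop.len + 1) →o Fin (n + 1)
  map φ := TypeCat.ofHom fun f => f.comp φ.unop.toOrderHom
  map_id _ := rfl
  map_comp _ _ := rfl

/-- The condition cutting a necklace with joint set `J` out of `Δstd N`:
no joint lies strictly between the first and last vertex of the simplex. -/
def NeckCond {N : ℕ} (J : Finset (Fin (N + 1))) {m : SimplexCategoryᵒᵖ}
    (f : Fin (m.unop.len + 1) →o Fin (N + 1)) : Prop :=
  ∀ t ∈ J, ¬ (f 0 < t ∧ t < f (Fin.last m.unop.len))

/-- The necklace with vertices `0,…,N` and joints `J` (a wedge of simplices glued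
end to end; the beads span the intervals between consecutive joints). -/
def Necklace (N : ℕ) (J : Finset (Fin (N + 1))) : SSet where
  obj m := { f : Fin (m.unop.len + 1) →o Fin (N + 1) // NeckCond J f }
  map φ := TypeCat.ofHom fun f => ⟨f.1.comp φ.unop.toOrderHom, by
    intro t ht h
    exact f.2 t ht ⟨lt_of_le_of_lt (f.1.monotone (Fin.zero_le _)) h.1,
      lt_of_lt_of_le h.2 (f.1.monotone (Fin.le_last _))⟩⟩
  map_id _ := rfl
  map_comp _ _ := rfl

/-- The vertex `v` of a necklace. -/
def vtx {N : ℕ} (J : Finset (Fin (N + 1))) (v : Fin (N + 1)) : (Necklace N J) _⦋0⦌ :=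
  ⟨⟨fun _ => v, fun _ _ _ => le_rfl⟩, fun _ _ h => absurd (h.1.trans h.2) (lt_irrefl v)⟩

/-- The canonical inclusion of a necklace into the simplex on its vertices. -/
def neckIncl (N : ℕ) (J : Finset (Fin (N + 1))) : Necklace N J ⟶ Δstd N where
  app _ := TypeCat.ofHom fun f => f.1
  naturality _ _ _ := rfl

lemma eq_vtx {N : ℕ} {J : Finset (Fin (N + 1))} (x : (Necklace N J) _⦋0⦌) :
    x = vtx J (x.1 0) := by
  refine Subtype.ext (OrderHom.ext _ _ (funext fun i => ?_))
  have : i = 0 := Subsingleton.elim (α := Fin 1) i 0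
  rw [this]; rfl

/-- The map induced on vertices by a map of necklaces. -/
def nvmap {N N' : ℕ} {J : Finset (Fin (N + 1))} {J' : Finset (Fin (N' + 1))}
    (g : Necklace N J ⟶ Necklace N' J') : Fin (N + 1) → Fin (N' + 1) :=
  fun v => (g.app (Opposite.op (⦋0⦌ : SimplexCategory)) (vtx J v)).1 0

lemma app_vtx {N N' : ℕ} {J : Finset (Fin (N + 1))} {J' : Finset (Fin (N' + 1))}
    (g : Necklace N J ⟶ Necklace N' J') (v : Fin (N + 1)) :
    g.app (Opposite.op (⦋0⦌ : SimplexCategory)) (vtx J v) = vtx J' (nvmap g v) :=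
  eq_vtx _

lemma nvmap_comp {N N' N'' : ℕ} {J : Finset (Fin (N + 1))} {J' : Finset (Fin (N' + 1))}
    {J'' : Finset (Fin (N'' + 1))} (g : Necklace N J ⟶ Necklace N' J')
    (h : Necklace N' J' ⟶ Necklace N'' J'') :
    nvmap (g ≫ h) = nvmap h ∘ nvmap g := by
  funext v
  show (h.app _ (g.app _ (vtx J v))).1 0 = _
  rw [app_vtx g v]
  rfl

/-- A map of simplicial sets is a *simple inclusion* if it has the right lifting
property with respect to the endpoint inclusions `∂Δ¹ ↪ T` for every necklace `T`. -/
def IsSimpleInclusion {A X : SSet} (i : A ⟶ X) : Prop :=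
  ∀ (N : ℕ) (J : Finset (Fin (N + 1))), (0 : Fin (N + 1)) ∈ J → Fin.last N ∈ J →
    ∀ (v : Necklace N J ⟶ X) (a b : A _⦋0⦌),
      i.app _ a = v.app _ (vtx J 0) → i.app _ b = v.app _ (vtx J (Fin.last N)) →
      ∃ l : Necklace N J ⟶ A, l ≫ i = v ∧
        l.app _ (vtx J 0) = a ∧ l.app _ (vtx J (Fin.last N)) = b

def Pstd (m : ℕ) (n : Fin m → ℕ) : SSet where
  obj k := ∀ i : Fin m, Fin (k.unop.len + 1) →o Fin (n i + 1)
  map φ := TypeCat.ofHom fun f => fun i => (f i).comp φ.unop.toOrderHom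
  map_id _ := rfl
  map_comp _ _ := rfl

/-- A simplex of a simplicial set is nondegenerate if it is not the image of a
lower-dimensional simplex under a degeneracy operator. -/
def IsNondeg {X : SSet} {n : ℕ} (x : X _⦋n⦌) : Prop :=
  ∀ (m : ℕ) (σ : (⦋n⦌ : SimplexCategory) ⟶ ⦋m⦌) (y : X _⦋m⦌),
    Function.Surjective σ.toOrderHom → x = X.map σ.op y → n ≤ m

/-- A simplex is degenerate if it is the image of a  strictly lower-dimensional
simplex under a (surjective) degeneracy operator. -/
def IsDegenerate {X : SSet} {n : ℕ} (x : X _⦋n⦌) : Prop :=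
  ∃ (m : ℕ) (σ : (⦋n⦌ : SimplexCategory) ⟶ ⦋m⦌) (y : X _⦋m⦌),
    m < n ∧ Function.Surjective σ.toOrderHom ∧ x = X.map σ.op y


/-- The bead of a necklace spanning two consecutive joints `j ≤ j'`. -/
def bead {N : ℕ} (J : Finset (Fin (N + 1))) (j j' : Fin (N + 1)) (hle : j ≤ j')
    (hcons : ∀ t ∈ J, ¬ (j < t ∧ t < j')) :
    (Necklace N J) _⦋j'.val - j.val⦌ :=
  ⟨⟨fun k => ⟨j.val + k.val, by
        have hk := k.isLt
        simp only [Opposite.unop_op, SimplexCategory.len_mk] at hk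
        have := j'.isLt; omega⟩,
      fun k k' h => by
        simp only [Fin.mk_le_mk]
        exact Nat.add_le_add_left h j.val⟩,
    by
      intro t ht h
      refine hcons t ht ⟨?_, ?_⟩
      · have h1 := h.1
        simp only [Fin.lt_def, OrderHom.coe_mk, Fin.val_zero] at h1 ⊢
        change j.val + 0 < t.val at h1
        omega
      · have h2 := h.2
        have hle' : j.val ≤ j'.val := hle
        simp only [Fin.lt_def, OrderHom.coe_mk, Fin.val_last, Opposite.unop_op,
          SimplexCategory.len_mk] at h2 ⊢
        change t.val < j.val + (j'.val - j.val) at h2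
        omega⟩

/-- A map from a necklace is totally nondegenerate if it sends each bead to a
nondegenerate simplex. -/
def TotallyNondeg {N : ℕ} {J : Finset (Fin (N + 1))} {S : SSet}
    (f : Necklace N J ⟶ S) : Prop :=
  ∀ (j j' : Fin (N + 1)), j ∈ J → j' ∈ J → ∀ (hlt : j < j')
    (hcons : ∀ t ∈ J, ¬ (j < t ∧ t < j')),
    IsNondeg (f.app _ (bead J j j' hlt.le hcons))

/-- A levelwise surjection of simplicial sets. -/
def LevelSurj {X Y : SSet} (f : X ⟶ Y) : Prop :=
  ∀ m, Function.Surjective (f.app m)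

/-- The category of necklaces over `S` with endpoints `a` and `b`. -/
structure NecOver (S : SSet) (a b : S _⦋0⦌) where
  N : ℕ
  J : Finset (Fin (N + 1))
  h0 : (0 : Fin (N + 1)) ∈ J
  hN : Fin.last N ∈ J
  f : Necklace N J ⟶ S
  ha : f.app _ (vtx J 0) = a
  hb : f.app _ (vtx J (Fin.last N)) = b

instance (S : SSet) (a b : S _⦋0⦌) : Category (NecOver S a b) where
  Hom t u := { g : Necklace t.N t.J ⟶ Necklace u.N u.J //
    g ≫ u.f = t.f ∧ g.app _ (vtx t.J 0) = vtx u.J 0 ∧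
    g.app _ (vtx t.J (Fin.last t.N)) = vtx u.J (Fin.last u.N) }
  id t := ⟨𝟙 _, Category.id_comp _, rfl, rfl⟩
  comp {t u v} g h := ⟨g.1 ≫ h.1, by rw [Category.assoc, h.2.1, g.2.1],
    by show h.1.app _ (g.1.app _ _) = _; rw [g.2.2.1, h.2.2.1],
    by show h.1.app _ (g.1.app _ _) = _; rw [g.2.2.2, h.2.2.2]⟩
  id_comp g := Subtype.ext (Category.id_comp _)
  comp_id g := Subtype.ext (Category.comp_id _)
  assoc f g h := Subtype.ext (Category.assoc _ _ _)


/-- Flagged necklaces over `S` with endpoints `a, b` and flags of length `n`. -/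
structure FlaggedNec (S : SSet) (a b : S _⦋0⦌) (n : ℕ) where
  N : ℕ
  J : Finset (Fin (N + 1))
  h0 : (0 : Fin (N + 1)) ∈ J
  hN : Fin.last N ∈ J
  f : Necklace N J ⟶ S
  ha : f.app _ (vtx J 0) = a
  hb : f.app _ (vtx J (Fin.last N)) = b
  flag : Fin (n + 1) → Finset (Fin (N + 1))
  flag_mono : Monotone flag
  flag_joints : J ⊆ flag 0

instance (S : SSet) (a b : S _⦋0⦌) (n : ℕ) : Category (FlaggedNec S a b n) where
  Hom t u := { g : Necklace t.N t.J ⟶ Necklace u.N u.J //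
    g ≫ u.f = t.f ∧ g.app _ (vtx t.J 0) = vtx u.J 0 ∧
    g.app _ (vtx t.J (Fin.last t.N)) = vtx u.J (Fin.last u.N) ∧
    ∀ i, (t.flag i).image (nvmap g) = u.flag i }
  id t := ⟨𝟙 _, Category.id_comp _, rfl, rfl, fun i => by
    have : nvmap (𝟙 (Necklace t.N t.J)) = id := rfl
    rw [this, Finset.image_id]⟩
  comp {t u v} g h := ⟨g.1 ≫ h.1, by rw [Category.assoc, h.2.1, g.2.1],
    by show h.1.app _ (g.1.app _ _) = _; rw [g.2.2.1, h.2.2.1],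
    by show h.1.app _ (g.1.app _ _) = _; rw [g.2.2.2.1, h.2.2.2.1],
    fun i => by
      rw [nvmap_comp, ← Finset.image_image, g.2.2.2.2 i, h.2.2.2.2 i]⟩
  id_comp g := Subtype.ext (Category.id_comp _)
  comp_id g := Subtype.ext (Category.comp_id _)
  assoc f g h := Subtype.ext (Category.assoc _ _ _)


theorem stmt11 (N : ℕ) (J : Finset (Fin (N + 1)))
    (h0 : (0 : Fin (N + 1)) ∈ J) (hN : Fin.last N ∈ J) :
    Ordered (Necklace N J) := by
  constructor
  · have key : ∀ a b : (Necklace N J) _⦋0⦌, vertPath _ a b → a.1 0 ≤ b.1 0 := by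
      intro a b h
      induction h with
      | refl => exact le_rfl
      | tail _ e ih =>
        obtain ⟨s, h1, h0'⟩ := e
        refine ih.trans ?_
        rw [← h1, ← h0']
        exact s.1.monotone (by decide)
    intro x y hxy hyx
    have := le_antisymm (key _ _ hxy) (key _ _ hyx)
    rw [eq_vtx x, eq_vtx y, this]
  · intro n x y h
    refine Subtype.ext (OrderHom.ext _ _ (funext fun i => ?_))
    exact congrFun (congrArg (fun z => (z.1 : Fin 1 → Fin (N + 1))) (congrFun h i)) 0

end Paper
end

section
/- If T is a necklace, X is an ordered simplicial set, and f : T → X is a map of simplicial sets, then the image of f is a necklace. -/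
open CategoryTheory Simplicial

namespace Paper

section ImageAux

variable {X : SSet} {N : ℕ} {J : Finset (Fin (N + 1))}

/-- The image of vertices under `f`. -/
noncomputable def phi (f : Necklace N J ⟶ X) (v : Fin (N + 1)) : X _⦋0⦌ :=
  f.app (Opposite.op (⦋0⦌ : SimplexCategory)) (vtx J v)

/-- The edge of a necklace between two consecutive vertices. -/
def nedge (J : Finset (Fin (N + 1))) (u : ℕ) (hu : u < N) : (Necklace N J) _⦋1⦌ :=
  ⟨⟨fun k => ⟨u + k.val, by have hk : k.val < 2 := k.isLt; omega⟩,
    by intro a b hab; simpa using Nat.add_le_add_left hab u⟩, by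
      intro t ht h
      have h1 := h.1
      have h2 := h.2
      simp only [Fin.lt_def, OrderHom.coe_mk] at h1 h2
      have hl : (Fin.last ((Opposite.op (⦋1⦌ : SimplexCategory)).unop.len)).val = 1 := rfl
      change t.val < u + 1 at h2
      change u + 0 < t.val at h1
      omega⟩

lemma edge_phi (f : Necklace N J ⟶ X) (u : ℕ) (hu : u < N) :
    edgeRel X (phi f ⟨u, by omega⟩) (phi f ⟨u + 1, by omega⟩) := by
  refine ⟨f.app (Opposite.op (⦋1⦌ : SimplexCategory)) (nedge J u hu), ?_, ?_⟩
  · show X.map (SimplexCategory.δ (1 : Fin 2)).op _ = _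
    rw [← FunctorToTypes.naturality f (SimplexCategory.δ (1 : Fin 2)).op (nedge J u hu)]
    show f.app _ _ = phi f _
    unfold phi
    exact congrArg (f.app _) (eq_vtx _)
  · show X.map (SimplexCategory.δ (0 : Fin 2)).op _ = _
    rw [← FunctorToTypes.naturality f (SimplexCategory.δ (0 : Fin 2)).op (nedge J u hu)]
    show f.app _ _ = phi f _
    unfold phi
    exact congrArg (f.app _) (eq_vtx _)

lemma phi_path (f : Necklace N J ⟶ X) (a b : ℕ) (hab : a ≤ b) (ha : a < N + 1)
    (hb : b < N + 1) : vertPath X (phi f ⟨a, ha⟩) (phi f ⟨b, hb⟩) := by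
  induction b with
  | zero =>
      obtain rfl : a = 0 := Nat.le_zero.1 hab
      exact Relation.ReflTransGen.refl
  | succ b ih =>
      rcases Nat.eq_or_lt_of_le hab with rfl | h
      · exact Relation.ReflTransGen.refl
      · have hab' : a ≤ b := by omega
        exact Relation.ReflTransGen.tail (ih hab' (by omega)) (edge_phi f b (by omega))

lemma phi_convex (hX : Ordered X) (f : Necklace N J ⟶ X) (a u b : ℕ)
    (hau : a ≤ u) (hub : u ≤ b) (hb : b < N + 1)
    (h : phi f ⟨a, by omega⟩ = phi f ⟨b, hb⟩) : phi f ⟨u, by omega⟩ = phi f ⟨a, by omega⟩ := by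
  refine hX.1 _ _ ?_ (phi_path f a u hau (by omega) (by omega))
  have p := phi_path f u b hub (by omega) hb
  rwa [← h] at p

/-- Clamped vertex-image function on ℕ. -/
noncomputable def phn (f : Necklace N J ⟶ X) : ℕ → X _⦋0⦌ :=
  fun k => phi f ⟨min k N, by omega⟩

lemma phn_eq (f : Necklace N J ⟶ X) (k : ℕ) (h : k < N + 1) :
    phn f k = phi f ⟨k, h⟩ := by
  unfold phn
  congr 1
  exact Fin.ext (by simp; omega)

lemma phn_val (f : Necklace N J ⟶ X) (v : Fin (N + 1)) : phn f v.val = phi f v :=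
  phn_eq f v.val v.isLt

lemma phn_convex (hX : Ordered X) (f : Necklace N J ⟶ X) (a u b : ℕ)
    (hau : a ≤ u) (hub : u ≤ b) (h : phn f a = phn f b) : phn f u = phn f a :=
  phi_convex hX f (min a N) (min u N) (min b N)
    (min_le_min hau le_rfl) (min_le_min hub le_rfl) (by omega) h

open Classical in
/-- break predicate. -/
noncomputable def brk (f : Necklace N J ⟶ X) : ℕ → Bool :=
  fun k => if phn f k = phn f (k + 1) then false else true

lemma brk_false (f : Necklace N J ⟶ X) {k : ℕ} (h : brk f k = false) :
    phn f k = phn f (k + 1) := by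
  unfold brk at h
  split at h
  · assumption
  · simp at h

lemma brk_of_eq (f : Necklace N J ⟶ X) {k : ℕ} (h : phn f k = phn f (k + 1)) :
    brk f k = false := by
  unfold brk
  split
  · rfl
  · exact absurd h ‹_›

/-- count of breaks below `v`. -/
noncomputable def gn (f : Necklace N J ⟶ X) : ℕ → ℕ :=
  fun v => ((Finset.range v).filter (fun k => brk f k)).card

lemma gn_zero (f : Necklace N J ⟶ X) : gn f 0 = 0 := by simp [gn]

lemma gn_mono (f : Necklace N J ⟶ X) : Monotone (gn f) := fun a b h =>
  Finset.card_le_card (Finset.filter_subset_filter _ (Finset.range_subset_range.2 h))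

lemma gn_succ (f : Necklace N J ⟶ X) (k : ℕ) :
    gn f (k + 1) = gn f k + (if brk f k then 1 else 0) := by
  unfold gn
  rw [Finset.range_add_one, Finset.filter_insert]
  split
  · rw [Finset.card_insert_of_notMem (by simp)]
  · simp

lemma phn_of_gn_eq (f : Necklace N J ⟶ X) :
    ∀ b a, a ≤ b → gn f a = gn f b → phn f a = phn f b := by
  intro b
  induction b with
  | zero => intro a ha _; obtain rfl : a = 0 := Nat.le_zero.1 ha; rfl
  | succ b ih =>
      intro a ha hg
      rcases Nat.eq_or_lt_of_le ha with rfl | h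
      · rfl
      · have ha' : a ≤ b := by omega
        have h1 : gn f a ≤ gn f b := gn_mono f ha'
        have hs := gn_succ f b
        have hb : brk f b = false := by
          by_contra hb
          rw [Bool.not_eq_false] at hb
          rw [hb] at hs
          simp at hs
          omega
        rw [hb] at hs
        simp at hs
        exact (ih a ha' (by omega)).trans (brk_false f hb)

lemma gn_of_phn_eq (hX : Ordered X) (f : Necklace N J ⟶ X) :
    ∀ b a, a ≤ b → phn f a = phn f b → gn f a = gn f b := by
  intro b
  induction b with
  | zero => intro a ha _; obtain rfl : a = 0 := Nat.le_zero.1 ha; rfl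
  | succ b ih =>
      intro a ha hp
      rcases Nat.eq_or_lt_of_le ha with rfl | h
      · rfl
      · have ha' : a ≤ b := by omega
        have hub : phn f b = phn f a := phn_convex hX f a b (b + 1) ha' (by omega) hp
        have hb : brk f b = false := brk_of_eq f (hub.trans (hp.trans rfl) |>.symm ▸ (hub.trans hp))
        have hs := gn_succ f b
        rw [hb] at hs
        simp at hs
        rw [hs]
        exact ih a ha' hub.symm

lemma gn_hit (f : Necklace N J ⟶ X) : ∀ n c, c ≤ gn f n → ∃ k, k ≤ n ∧ gn f k = c := by
  intro n
  induction n with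
  | zero => intro c hc; rw [gn_zero] at hc; exact ⟨0, le_rfl, by rw [gn_zero]; omega⟩
  | succ n ih =>
      intro c hc
      by_cases h : c ≤ gn f n
      · obtain ⟨k, hk, hgk⟩ := ih c h
        exact ⟨k, hk.trans (Nat.le_succ n), hgk⟩
      · have hs := gn_succ f n
        have h2 : gn f (n + 1) ≤ gn f n + 1 := by rw [hs]; split <;> omega
        exact ⟨n + 1, le_rfl, by omega⟩

end ImageAux

section ImageAux2

variable {X : SSet} {N : ℕ} {J : Finset (Fin (N + 1))}

/-- Number of joints -1 of the image necklace. -/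
noncomputable def Nn (f : Necklace N J ⟶ X) : ℕ := gn f N

/-- The collapse map on vertices. -/
noncomputable def gF (f : Necklace N J ⟶ X) (v : Fin (N + 1)) : Fin (Nn f + 1) :=
  ⟨gn f v.val, Nat.lt_succ_of_le (gn_mono f (Nat.le_of_lt_succ v.isLt))⟩

/-- Minimum of a fiber of `gn`. -/
noncomputable def mnf (f : Necklace N J ⟶ X) (c : ℕ) : ℕ :=
  sInf {k | k ≤ N ∧ gn f k = c}

open Classical in
/-- Maximum of a fiber of `gn`. -/
noncomputable def mxf (f : Necklace N J ⟶ X) (c : ℕ) : ℕ :=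
  Nat.findGreatest (fun k => gn f k = c) N

lemma mnf_mem (f : Necklace N J ⟶ X) {c : ℕ} (hc : c ≤ gn f N) :
    mnf f c ≤ N ∧ gn f (mnf f c) = c := by
  have hex := gn_hit f N c hc
  have : {k | k ≤ N ∧ gn f k = c}.Nonempty := by
    obtain ⟨k, hk, hgk⟩ := hex; exact ⟨k, hk, hgk⟩
  exact Nat.sInf_mem this

lemma mnf_le (f : Necklace N J ⟶ X) {c t : ℕ} (ht : t ≤ N) (hgt : gn f t = c) :
    mnf f c ≤ t :=
  Nat.sInf_le ⟨ht, hgt⟩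

lemma mxf_le_N (f : Necklace N J ⟶ X) (c : ℕ) : mxf f c ≤ N := by
  classical
  exact Nat.findGreatest_le N

lemma gn_mxf (f : Necklace N J ⟶ X) {c : ℕ} (hc : c ≤ gn f N) : gn f (mxf f c) = c := by
  classical
  obtain ⟨k, hk, hgk⟩ := gn_hit f N c hc
  exact Nat.findGreatest_spec (P := fun k => gn f k = c) hk hgk

lemma le_mxf (f : Necklace N J ⟶ X) {c t : ℕ} (ht : t ≤ N) (hgt : gn f t = c) :
    t ≤ mxf f c := by
  classical
  exact Nat.le_findGreatest ht hgt

lemma mxf_lt_mnf (f : Necklace N J ⟶ X) {c c' : ℕ} (hc : c ≤ gn f N) (hc' : c' ≤ gn f N)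
    (h : c < c') : mxf f c < mnf f c' := by
  by_contra hcon
  push_neg at hcon
  have h1 := gn_mono f hcon
  rw [(mnf_mem f hc').2, gn_mxf f hc] at h1
  omega

/-- The lift of a simplex of the image necklace back to the source necklace. -/
noncomputable def liftN (f : Necklace N J ⟶ X) (k : SimplexCategoryᵒᵖ)
    (h : Fin (k.unop.len + 1) →o Fin (Nn f + 1)) : Fin (k.unop.len + 1) →o Fin (N + 1) where
  toFun i :=
    if h i = h 0 then ⟨mxf f (h 0).val, Nat.lt_succ_of_le (mxf_le_N f _)⟩
    else ⟨mnf f (h i).val,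
      Nat.lt_succ_of_le (mnf_mem f (Nat.le_of_lt_succ (h i).isLt)).1⟩
  monotone' := by
    intro i j hij
    have h0i : h 0 ≤ h i := h.monotone (Fin.zero_le _)
    have h0j : h 0 ≤ h j := h.monotone (Fin.zero_le _)
    have hij' : h i ≤ h j := h.monotone hij
    dsimp only
    split_ifs with hi hj hj
    · exact le_rfl
    · have hlt : (h 0).val < (h j).val := by
        rcases lt_or_eq_of_le h0j with hl | he
        · exact hl
        · exact absurd (Fin.ext (congrArg Fin.val he)).symm hj
      exact le_of_lt (mxf_lt_mnf f (Nat.le_of_lt_succ (h 0).isLt)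
        (Nat.le_of_lt_succ (h j).isLt) hlt)
    · exact absurd (le_antisymm (hj ▸ hij') h0i) hi
    · rcases eq_or_lt_of_le hij' with he | hl
      · rw [he]
      · have h1 : mnf f (h i).val ≤ mxf f (h i).val :=
          le_mxf f (mnf_mem f (Nat.le_of_lt_succ (h i).isLt)).1
            (mnf_mem f (Nat.le_of_lt_succ (h i).isLt)).2
        exact Fin.mk_le_mk.2 (le_of_lt (lt_of_le_of_lt h1
          (mxf_lt_mnf f (Nat.le_of_lt_succ (h i).isLt) (Nat.le_of_lt_succ (h j).isLt) hl)))

lemma gF_liftN (f : Necklace N J ⟶ X) (k : SimplexCategoryᵒᵖ)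
    (h : Fin (k.unop.len + 1) →o Fin (Nn f + 1)) (i : Fin (k.unop.len + 1)) :
    gF f (liftN f k h i) = h i := by
  apply Fin.ext
  show gn f (((if h i = h 0 then _ else _) : Fin (N + 1))).val = (h i).val
  split
  · next heq => rw [heq]; exact gn_mxf f (Nat.le_of_lt_succ (h 0).isLt)
  · exact (mnf_mem f (Nat.le_of_lt_succ (h i).isLt)).2

lemma liftN_cond (f : Necklace N J ⟶ X) (k : SimplexCategoryᵒᵖ)
    (h : Fin (k.unop.len + 1) →o Fin (Nn f + 1)) (hcond : NeckCond (J.image (gF f)) h) :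
    NeckCond J (liftN f k h) := by
  intro t ht hlt
  obtain ⟨h1, h2⟩ := hlt
  by_cases hc : h (Fin.last k.unop.len) = h 0
  · have : liftN f k h (Fin.last k.unop.len) = liftN f k h 0 := by
      show (if h (Fin.last k.unop.len) = h 0 then _ else _) = (if h 0 = h 0 then _ else _)
      rw [if_pos hc, if_pos rfl]
    rw [this] at h2
    exact absurd (h1.trans h2) (lt_irrefl _)
  · have hl0 : liftN f k h 0 = ⟨mxf f (h 0).val, Nat.lt_succ_of_le (mxf_le_N f _)⟩ := by
      show (if h 0 = h 0 then _ else _) = _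
      rw [if_pos rfl]
    have hll : liftN f k h (Fin.last k.unop.len) = ⟨mnf f (h (Fin.last k.unop.len)).val,
        Nat.lt_succ_of_le (mnf_mem f (Nat.le_of_lt_succ (h (Fin.last k.unop.len)).isLt)).1⟩ := by
      show (if h (Fin.last k.unop.len) = h 0 then _ else _) = _
      rw [if_neg hc]
    rw [hl0] at h1
    rw [hll] at h2
    have htN : t.val ≤ N := Nat.le_of_lt_succ t.isLt
    have h0N : (h 0).val ≤ gn f N := Nat.le_of_lt_succ (h 0).isLt
    have hlN : (h (Fin.last k.unop.len)).val ≤ gn f N :=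
      Nat.le_of_lt_succ (h (Fin.last k.unop.len)).isLt
    have hg1 : (h 0).val < gn f t.val := by
      have hle : gn f (mxf f (h 0).val) ≤ gn f t.val := gn_mono f (le_of_lt h1)
      rw [gn_mxf f h0N] at hle
      rcases eq_or_lt_of_le hle with he | hl
      · exact absurd (le_mxf f htN he.symm) (not_le.2 h1)
      · exact hl
    have hg2 : gn f t.val < (h (Fin.last k.unop.len)).val := by
      have hle : gn f t.val ≤ gn f (mnf f (h (Fin.last k.unop.len)).val) :=
        gn_mono f (le_of_lt h2)
      rw [(mnf_mem f hlN).2] at hle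
      rcases eq_or_lt_of_le hle with he | hl
      · exact absurd (mnf_le f htN he) (not_le.2 h2)
      · exact hl
    exact hcond (gF f t) (Finset.mem_image_of_mem _ ht) ⟨hg1, hg2⟩

end ImageAux2

section ImageAux3

variable {X : SSet} {N : ℕ} {J : Finset (Fin (N + 1))}

lemma vertexSeq_app (f : Necklace N J ⟶ X) (k : SimplexCategoryᵒᵖ)
    (t : (Necklace N J).obj k) (i : Fin (k.unop.len + 1)) :
    vertexSeq (n := k.unop.len) (f.app k t) i = phi f (t.1 i) := by
  have hnat : f.app (Opposite.op (⦋0⦌ : SimplexCategory))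
      ((Necklace N J).map ((SimplexCategory.const (⦋0⦌ : SimplexCategory) ⦋k.unop.len⦌ i).op :
        k ⟶ Opposite.op (⦋0⦌ : SimplexCategory)) t) =
      X.map ((SimplexCategory.const (⦋0⦌ : SimplexCategory) ⦋k.unop.len⦌ i).op :
        k ⟶ Opposite.op (⦋0⦌ : SimplexCategory)) (f.app k t) :=
    FunctorToTypes.naturality f _ t
  show X.map ((SimplexCategory.const (⦋0⦌ : SimplexCategory) ⦋k.unop.len⦌ i).op :
      k ⟶ Opposite.op (⦋0⦌ : SimplexCategory)) (f.app k t) = _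
  rw [← hnat]
  exact congrArg (f.app _) (eq_vtx _)

lemma app_eq_of_gn (hX : Ordered X) (f : Necklace N J ⟶ X) (k : SimplexCategoryᵒᵖ)
    (t t' : (Necklace N J).obj k)
    (h : ∀ i, gn f (t.1 i).val = gn f (t'.1 i).val) : f.app k t = f.app k t' := by
  apply hX.2 k.unop.len (f.app k t) (f.app k t')
  funext i
  rw [vertexSeq_app f k t i, vertexSeq_app f k t' i]
  rcases le_total (t.1 i).val (t'.1 i).val with hle | hle
  · rw [← phn_val f (t.1 i), ← phn_val f (t'.1 i)]
    exact phn_of_gn_eq f _ _ hle (h i)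
  · rw [← phn_val f (t.1 i), ← phn_val f (t'.1 i)]
    exact (phn_of_gn_eq f _ _ hle (h i).symm).symm

lemma gn_eq_of_app (hX : Ordered X) (f : Necklace N J ⟶ X) (k : SimplexCategoryᵒᵖ)
    (t t' : (Necklace N J).obj k) (h : f.app k t = f.app k t') (i : Fin (k.unop.len + 1)) :
    gn f (t.1 i).val = gn f (t'.1 i).val := by
  have hv : phi f (t.1 i) = phi f (t'.1 i) := by
    rw [← vertexSeq_app f k t i, ← vertexSeq_app f k t' i, h]
  rcases le_total (t.1 i).val (t'.1 i).val with hle | hle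
  · exact gn_of_phn_eq hX f _ _ hle (by rw [phn_val, phn_val]; exact hv)
  · exact (gn_of_phn_eq hX f _ _ hle (by rw [phn_val, phn_val]; exact hv.symm)).symm

lemma psi_cond (f : Necklace N J ⟶ X) (k : SimplexCategoryᵒᵖ) (t : (Necklace N J).obj k) :
    NeckCond (J.image (gF f))
      (⟨fun i => gF f (t.1 i), fun i j hij => gn_mono f (t.1.monotone hij)⟩ :
        Fin (k.unop.len + 1) →o Fin (Nn f + 1)) := by
  intro t' ht' hlt
  obtain ⟨s, hs, rfl⟩ := Finset.mem_image.1 ht'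
  refine t.2 s hs ⟨?_, ?_⟩
  · by_contra hcon
    push_neg at hcon
    exact absurd hlt.1 (not_lt.2 (gn_mono f hcon))
  · by_contra hcon
    push_neg at hcon
    exact absurd hlt.2 (not_lt.2 (gn_mono f hcon))

/-- The simplex of the image necklace associated to a simplex of the source necklace. -/
noncomputable def psiOH (f : Necklace N J ⟶ X) (k : SimplexCategoryᵒᵖ)
    (t : (Necklace N J).obj k) : (Necklace (Nn f) (J.image (gF f))).obj k :=
  ⟨⟨fun i => gF f (t.1 i), fun i j hij => gn_mono f (t.1.monotone hij)⟩, psi_cond f k t⟩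

/-- The lift, as a simplex of the source necklace. -/
noncomputable def liftT (f : Necklace N J ⟶ X) (k : SimplexCategoryᵒᵖ)
    (h : (Necklace (Nn f) (J.image (gF f))).obj k) : (Necklace N J).obj k :=
  ⟨liftN f k h.1, liftN_cond f k h.1 h.2⟩

lemma psiOH_liftT (f : Necklace N J ⟶ X) (k : SimplexCategoryᵒᵖ)
    (h : (Necklace (Nn f) (J.image (gF f))).obj k) :
    psiOH f k (liftT f k h) = h := by
  refine Subtype.ext (OrderHom.ext _ _ (funext fun i => ?_))
  exact gF_liftN f k h.1 i

noncomputable def imgEquiv (hX : Ordered X) (f : Necklace N J ⟶ X) (k : SimplexCategoryᵒᵖ) :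
    ((Subfunctor.range f).toFunctor.obj k) ≃
      ((Necklace (Nn f) (J.image (gF f))).obj k) where
  toFun x := psiOH f k x.2.choose
  invFun h := ⟨f.app k (liftT f k h), ⟨liftT f k h, rfl⟩⟩
  left_inv x := by
    refine Subtype.ext ?_
    show f.app k (liftT f k (psiOH f k x.2.choose)) = x.1
    refine Eq.trans (app_eq_of_gn hX f k _ _ (fun i => ?_)) x.2.choose_spec
    exact congrArg Fin.val (gF_liftN f k (psiOH f k x.2.choose).1 i)
  right_inv h := by
    set y : (Subfunctor.range f).toFunctor.obj k :=
      ⟨f.app k (liftT f k h), ⟨liftT f k h, rfl⟩⟩ with hy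
    have hspec : f.app k y.2.choose = f.app k (liftT f k h) := y.2.choose_spec
    have := gn_eq_of_app hX f k y.2.choose (liftT f k h) hspec
    refine Subtype.ext (OrderHom.ext _ _ (funext fun i => ?_))
    show gF f (y.2.choose.1 i) = h.1 i
    refine Fin.ext ?_
    have h2 := congrArg Fin.val (gF_liftN f k h.1 i)
    exact (this i).trans h2

noncomputable def imgIso (hX : Ordered X) (f : Necklace N J ⟶ X) :
    (Subfunctor.range f).toFunctor ≅ Necklace (Nn f) (J.image (gF f)) := by
  refine NatIso.ofComponents (fun k => (imgEquiv hX f k).toIso) ?_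
  intro k k' α
  ext x
  show psiOH f k' ((⟨X.map α x.1, _⟩ :
      (Subfunctor.range f).toFunctor.obj k')).2.choose =
    (Necklace (Nn f) (J.image (gF f))).map α (psiOH f k x.2.choose)
  refine Subtype.ext (OrderHom.ext _ _ (funext fun i => ?_))
  refine Fin.ext ?_
  show gn f _ = gn f _
  have hx : X.map α x.1 = f.app k' ((Necklace N J).map α x.2.choose) :=
    (congrArg (X.map α) x.2.choose_spec.symm).trans
      (FunctorToTypes.naturality f α x.2.choose).symm
  have hch := (⟨X.map α x.1, (Subfunctor.range f).map α x.2⟩ :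
      (Subfunctor.range f).toFunctor.obj k').2.choose_spec
  exact gn_eq_of_app hX f k' _ _ (hch.trans hx) i

end ImageAux3


theorem stmt12 (X : SSet) (hX : Ordered X) (N : ℕ) (J : Finset (Fin (N + 1)))
    (h0 : (0 : Fin (N + 1)) ∈ J) (hN : Fin.last N ∈ J) (f : Necklace N J ⟶ X) :
    ∃ (N' : ℕ) (J' : Finset (Fin (N' + 1))),
      (0 : Fin (N' + 1)) ∈ J' ∧ Fin.last N' ∈ J' ∧
      Nonempty ((Subfunctor.range f).toFunctor ≅ Necklace N' J') := by
  refine ⟨Nn f, J.image (gF f), ?_, ?_, ⟨imgIso hX f⟩⟩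
  · have h : gF f 0 = 0 := Fin.ext (gn_zero f)
    exact h ▸ Finset.mem_image_of_mem _ h0
  · have h : gF f (Fin.last N) = Fin.last (Nn f) := Fin.ext rfl
    exact h ▸ Finset.mem_image_of_mem _ hN


end Paper
end
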